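/- Assume: (i) the only operator A ∈ B(K₀,H₀) with T₀A = AT̃₀ is A = 0, and (ii) the only operator B ∈ B(H₁,K₁) with T̃₁B = BT₁ is B = 0. Suppose U : H₀⊕H₁ → K₀⊕K₁ is unitary with UT = T̃U, with block decomposition U = [[U₀₀, U₀₁],[U₁₀, U₁₁]]. Then: U₀₀ = U₀₁∘X* and U₁₁ = −U₁₀∘X; U₀₁ and U₁₀ are invertible; U₁₀T₀ = T̃₁U₁₀ (so U₁₀T₀U₁₀⁻¹ = T̃₁) and T₁U₀₁* = U₀₁*T̃₀ (so (U₀₁*)⁻¹T₁U₀₁* = T̃₀); U₁₀*∘U₁₀ = (1 + X∘X*)⁻¹ and U₀₁*∘U₀₁ = (1 + X*∘X)⁻¹; and T̃₀∘(Y − U₀₁∘X*∘U₁₀⁻¹) = (Y − U₀₁∘X*∘U₁₀⁻¹)∘T̃₁. -/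

import Mathlib

open ContinuousLinearMap

noncomputable def blockOp {H₀ H₁ K₀ K₁ : Type*}
    [NormedAddCommGroup H₀] [InnerProductSpace ℂ H₀]
    [NormedAddCommGroup H₁] [InnerProductSpace ℂ H₁]
    [NormedAddCommGroup K₀] [InnerProductSpace ℂ K₀]
    [NormedAddCommGroup K₁] [InnerProductSpace ℂ K₁]
    (A : H₀ →L[ℂ] K₀) (B : H₁ →L[ℂ] K₀) (C : H₀ →L[ℂ] K₁) (D : H₁ →L[ℂ] K₁) :
    WithLp 2 (H₀ × H₁) →L[ℂ] WithLp 2 (K₀ × K₁) :=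
  (((WithLp.prodContinuousLinearEquiv 2 ℂ K₀ K₁).symm : (K₀ × K₁) →L[ℂ] WithLp 2 (K₀ × K₁)) ∘L
    ((A.coprod B).prod (C.coprod D))) ∘L
    ((WithLp.prodContinuousLinearEquiv 2 ℂ H₀ H₁ : WithLp 2 (H₀ × H₁) →L[ℂ] (H₀ × H₁)))

section infra
variable {H₀ H₁ K₀ K₁ L₀ L₁ : Type*}
    [NormedAddCommGroup H₀] [InnerProductSpace ℂ H₀]
    [NormedAddCommGroup H₁] [InnerProductSpace ℂ H₁]
    [NormedAddCommGroup K₀] [InnerProductSpace ℂ K₀]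
    [NormedAddCommGroup K₁] [InnerProductSpace ℂ K₁]
    [NormedAddCommGroup L₀] [InnerProductSpace ℂ L₀]
    [NormedAddCommGroup L₁] [InnerProductSpace ℂ L₁]

lemma blockOp_fst (A : H₀ →L[ℂ] K₀) (B : H₁ →L[ℂ] K₀) (C : H₀ →L[ℂ] K₁) (D : H₁ →L[ℂ] K₁)
    (x : WithLp 2 (H₀ × H₁)) : (blockOp A B C D x).fst = A x.fst + B x.snd := rfl

lemma blockOp_snd (A : H₀ →L[ℂ] K₀) (B : H₁ →L[ℂ] K₀) (C : H₀ →L[ℂ] K₁) (D : H₁ →L[ℂ] K₁)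
    (x : WithLp 2 (H₀ × H₁)) : (blockOp A B C D x).snd = C x.fst + D x.snd := rfl

lemma blockOp_comp (A : K₀ →L[ℂ] L₀) (B : K₁ →L[ℂ] L₀) (C : K₀ →L[ℂ] L₁) (D : K₁ →L[ℂ] L₁)
    (E : H₀ →L[ℂ] K₀) (F : H₁ →L[ℂ] K₀) (G : H₀ →L[ℂ] K₁) (K : H₁ →L[ℂ] K₁) :
    blockOp A B C D ∘L blockOp E F G K =
      blockOp (A ∘L E + B ∘L G) (A ∘L F + B ∘L K) (C ∘L E + D ∘L G) (C ∘L F + D ∘L K) := by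
  ext x
  apply WithLp.ofLp_injective
  refine Prod.ext ?_ ?_
  · show (blockOp A B C D (blockOp E F G K x)).fst = _
    simp only [WithLp.ofLp_fst, WithLp.ofLp_snd, blockOp_fst, blockOp_snd, map_add, ContinuousLinearMap.add_apply,
      ContinuousLinearMap.comp_apply]
    abel
  · show (blockOp A B C D (blockOp E F G K x)).snd = _
    simp only [WithLp.ofLp_fst, WithLp.ofLp_snd, blockOp_fst, blockOp_snd, map_add, ContinuousLinearMap.add_apply,
      ContinuousLinearMap.comp_apply]
    abel

lemma blockOp_one :
    blockOp (1 : H₀ →L[ℂ] H₀) 0 0 (1 : H₁ →L[ℂ] H₁)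
      = ContinuousLinearMap.id ℂ (WithLp 2 (H₀ × H₁)) := by
  ext x
  apply WithLp.ofLp_injective
  refine Prod.ext ?_ ?_
  · show (1 : H₀ →L[ℂ] H₀) x.fst + (0 : H₁ →L[ℂ] H₀) x.snd = x.fst
    simp
  · show (0 : H₀ →L[ℂ] H₁) x.fst + (1 : H₁ →L[ℂ] H₁) x.snd = x.snd
    simp

lemma blockOp_inj {A A' : H₀ →L[ℂ] K₀} {B B' : H₁ →L[ℂ] K₀} {C C' : H₀ →L[ℂ] K₁}
    {D D' : H₁ →L[ℂ] K₁} (h : blockOp A B C D = blockOp A' B' C' D') :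
    A = A' ∧ B = B' ∧ C = C' ∧ D = D' := by
  have hfun := fun x => congrArg (fun f => f x) h
  refine ⟨?_, ?_, ?_, ?_⟩
  · ext v
    have h1 : A v + B 0 = A' v + B' 0 :=
      congrArg WithLp.fst (hfun ((WithLp.prodContinuousLinearEquiv 2 ℂ H₀ H₁).symm (v, 0)))
    simpa using h1
  · ext v
    have h1 : A 0 + B v = A' 0 + B' v :=
      congrArg WithLp.fst (hfun ((WithLp.prodContinuousLinearEquiv 2 ℂ H₀ H₁).symm (0, v)))
    simpa using h1
  · ext v
    have h1 : C v + D 0 = C' v + D' 0 :=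
      congrArg WithLp.snd (hfun ((WithLp.prodContinuousLinearEquiv 2 ℂ H₀ H₁).symm (v, 0)))
    simpa using h1
  · ext v
    have h1 : C 0 + D v = C' 0 + D' v :=
      congrArg WithLp.snd (hfun ((WithLp.prodContinuousLinearEquiv 2 ℂ H₀ H₁).symm (0, v)))
    simpa using h1

lemma adjoint_blockOp [CompleteSpace H₀] [CompleteSpace H₁] [CompleteSpace K₀] [CompleteSpace K₁]
    (A : H₀ →L[ℂ] K₀) (B : H₁ →L[ℂ] K₀) (C : H₀ →L[ℂ] K₁) (D : H₁ →L[ℂ] K₁) :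
    adjoint (blockOp A B C D)
      = blockOp (adjoint A) (adjoint C) (adjoint B) (adjoint D) := by
  symm
  rw [eq_adjoint_iff]
  intro x y
  simp only [WithLp.prod_inner_apply, WithLp.ofLp_fst, WithLp.ofLp_snd, blockOp_fst, blockOp_snd, inner_add_left, inner_add_right,
    adjoint_inner_left]
  ring

end infra

set_option maxHeartbeats 1000000 in
theorem stmt2 {H₀ H₁ K₀ K₁ : Type*}
    [NormedAddCommGroup H₀] [InnerProductSpace ℂ H₀] [CompleteSpace H₀]
    [NormedAddCommGroup H₁] [InnerProductSpace ℂ H₁] [CompleteSpace H₁]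
    [NormedAddCommGroup K₀] [InnerProductSpace ℂ K₀] [CompleteSpace K₀]
    [NormedAddCommGroup K₁] [InnerProductSpace ℂ K₁] [CompleteSpace K₁]
    (T₀ : H₀ →L[ℂ] H₀) (T₁ : H₁ →L[ℂ] H₁) (X : H₁ →L[ℂ] H₀)
    (T' : K₀ →L[ℂ] K₀) (T'' : K₁ →L[ℂ] K₁) (Y : K₁ →L[ℂ] K₀)
    (h1 : ∀ A : K₀ →L[ℂ] H₀, T₀ ∘L A = A ∘L T' → A = 0)
    (h2 : ∀ B : H₁ →L[ℂ] K₁, T'' ∘L B = B ∘L T₁ → B = 0)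
    (U₀₀ : H₀ →L[ℂ] K₀) (U₀₁ : H₁ →L[ℂ] K₀) (U₁₀ : H₀ →L[ℂ] K₁) (U₁₁ : H₁ →L[ℂ] K₁)
    (U : WithLp 2 (H₀ × H₁) →L[ℂ] WithLp 2 (K₀ × K₁))
    (hU : U = blockOp U₀₀ U₀₁ U₁₀ U₁₁)
    (hU1 : adjoint U ∘L U = ContinuousLinearMap.id ℂ _)
    (hU2 : U ∘L adjoint U = ContinuousLinearMap.id ℂ _)
    (hUT : U ∘L blockOp T₀ (X ∘L T₁ - T₀ ∘L X) 0 T₁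
        = blockOp T' (Y ∘L T'' - T' ∘L Y) 0 T'' ∘L U) :
    U₀₀ = U₀₁ ∘L adjoint X ∧
    U₁₁ = -(U₁₀ ∘L X) ∧
    (∃ V₀₁ : K₀ →L[ℂ] H₁, U₀₁ ∘L V₀₁ = 1 ∧ V₀₁ ∘L U₀₁ = 1) ∧
    U₁₀ ∘L T₀ = T'' ∘L U₁₀ ∧
    T₁ ∘L adjoint U₀₁ = adjoint U₀₁ ∘L T' ∧
    (adjoint U₁₀ ∘L U₁₀) ∘L (1 + X ∘L adjoint X) = 1 ∧
    (1 + X ∘L adjoint X) ∘L (adjoint U₁₀ ∘L U₁₀) = 1 ∧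
    (adjoint U₀₁ ∘L U₀₁) ∘L (1 + adjoint X ∘L X) = 1 ∧
    (1 + adjoint X ∘L X) ∘L (adjoint U₀₁ ∘L U₀₁) = 1 ∧
    ∃ V₁₀ : K₁ →L[ℂ] H₀, U₁₀ ∘L V₁₀ = 1 ∧ V₁₀ ∘L U₁₀ = 1 ∧
      T' ∘L (Y - U₀₁ ∘L adjoint X ∘L V₁₀) = (Y - U₀₁ ∘L adjoint X ∘L V₁₀) ∘L T'' := by
  have hadj : adjoint U = blockOp (adjoint U₀₀) (adjoint U₁₀) (adjoint U₀₁) (adjoint U₁₁) := by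
    rw [hU, adjoint_blockOp]
  have hu1 := hU1
  rw [hadj, hU, blockOp_comp, ← blockOp_one] at hu1
  obtain ⟨e1, e2, e3, e4⟩ := blockOp_inj hu1
  have hu2 := hU2
  rw [hadj, hU, blockOp_comp, ← blockOp_one] at hu2
  obtain ⟨f1, _f2, _f3, f4⟩ := blockOp_inj hu2
  have hut := hUT
  rw [hU, blockOp_comp, blockOp_comp] at hut
  obtain ⟨g1, _g2, g3, g4⟩ := blockOp_inj hut
  simp only [comp_zero, zero_comp, add_zero, zero_add] at g1 g3 g4
  have hTU : blockOp T₀ (X ∘L T₁ - T₀ ∘L X) 0 T₁ ∘L adjoint U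
      = adjoint U ∘L blockOp T' (Y ∘L T'' - T' ∘L Y) 0 T'' := by
    calc blockOp T₀ (X ∘L T₁ - T₀ ∘L X) 0 T₁ ∘L adjoint U
        = ((adjoint U ∘L U) ∘L blockOp T₀ (X ∘L T₁ - T₀ ∘L X) 0 T₁) ∘L adjoint U := by
          rw [hU1, id_comp]
      _ = (adjoint U ∘L (U ∘L blockOp T₀ (X ∘L T₁ - T₀ ∘L X) 0 T₁)) ∘L adjoint U := by
          rw [comp_assoc (adjoint U) U _]
      _ = (adjoint U ∘L (blockOp T' (Y ∘L T'' - T' ∘L Y) 0 T'' ∘L U)) ∘L adjoint U := by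
          rw [hUT]
      _ = adjoint U ∘L ((blockOp T' (Y ∘L T'' - T' ∘L Y) 0 T'' ∘L U) ∘L adjoint U) := by
          rw [comp_assoc (adjoint U) _ (adjoint U)]
      _ = adjoint U ∘L (blockOp T' (Y ∘L T'' - T' ∘L Y) 0 T'' ∘L (U ∘L adjoint U)) := by
          rw [comp_assoc _ U (adjoint U)]
      _ = adjoint U ∘L blockOp T' (Y ∘L T'' - T' ∘L Y) 0 T'' := by rw [hU2, comp_id]
  rw [hadj, blockOp_comp, blockOp_comp] at hTU
  obtain ⟨a1, _a2, a3, _a4⟩ := blockOp_inj hTU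
  simp only [comp_zero, zero_comp, add_zero, zero_add] at a1 a3
  -- claim 2 : U₁₁ = -(U₁₀ ∘L X)
  have c2 : U₁₁ = -(U₁₀ ∘L X) := by
    refine eq_neg_of_add_eq_zero_right (h2 _ ?_)
    simp only [comp_add, add_comp, comp_sub, sub_comp, ← comp_assoc] at g4 ⊢
    rw [← g3, ← g4]; abel
  -- claim 1 : U₀₀ = U₀₁ ∘L adjoint X
  have ha0 : adjoint U₀₀ = X ∘L adjoint U₀₁ := by
    refine sub_eq_zero.mp (h1 _ ?_)
    simp only [comp_add, add_comp, comp_sub, sub_comp, ← comp_assoc] at a1 ⊢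
    rw [comp_assoc X (adjoint U₀₁) T', ← a3, ← comp_assoc, ← a1]; abel
  have c1 : U₀₀ = U₀₁ ∘L adjoint X := by
    have h := congrArg (adjoint (𝕜 := ℂ)) ha0
    rwa [adjoint_adjoint, adjoint_comp, adjoint_adjoint] at h
  have c2a : adjoint U₁₁ = -(adjoint X ∘L adjoint U₁₀) := by
    rw [c2, map_neg, adjoint_comp]
  have hadj1H : adjoint (1 : H₀ →L[ℂ] H₀) = 1 := by rw [one_def, adjoint_id]
  have hadj1H1 : adjoint (1 : H₁ →L[ℂ] H₁) = 1 := by rw [one_def, adjoint_id]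
  -- right inverse of U₁₀
  have hi : U₁₀ ∘L ((1 + X ∘L adjoint X) ∘L adjoint U₁₀) = 1 := by
    rw [c2a, c2] at f4
    simp only [neg_comp, comp_neg, neg_neg, ← comp_assoc] at f4
    simp only [comp_add, add_comp, one_def, id_comp, ← comp_assoc]
    exact f4
  -- left inverse of U₁₀
  have hvi : ((1 + X ∘L adjoint X) ∘L adjoint U₁₀) ∘L U₁₀ = 1 := by
    have e3' : X ∘L (adjoint U₀₁ ∘L U₀₀ + adjoint U₁₁ ∘L U₁₀) = 0 := by rw [e3, comp_zero]
    rw [c2a, c1] at e3'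
    rw [ha0, c1] at e1
    simp only [comp_add, add_comp, comp_neg, neg_comp, neg_neg, one_def, id_comp,
      ← comp_assoc] at e1 e3' ⊢
    rw [add_neg_eq_zero] at e3'
    rw [← e1, e3']
    all_goals abel
  -- right inverse of U₀₁
  have hiii : U₀₁ ∘L ((1 + adjoint X ∘L X) ∘L adjoint U₀₁) = 1 := by
    rw [ha0, c1] at f1
    simp only [comp_add, add_comp, one_def, id_comp, ← comp_assoc] at f1 ⊢
    rw [← f1]
    all_goals abel
  -- left inverse of U₀₁
  have hvii : ((1 + adjoint X ∘L X) ∘L adjoint U₀₁) ∘L U₀₁ = 1 := by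
    have e2' : adjoint X ∘L (adjoint U₀₀ ∘L U₀₁ + adjoint U₁₀ ∘L U₁₁) = 0 := by
      rw [e2, comp_zero]
    rw [ha0, c2] at e2'
    rw [c2a, c2] at e4
    simp only [comp_add, add_comp, comp_neg, neg_comp, neg_neg, one_def, id_comp,
      ← comp_assoc] at e2' e4 ⊢
    rw [add_neg_eq_zero] at e2'
    rw [← e4, e2']
    all_goals abel
  -- claims 6-9
  have hSadj : adjoint (1 + X ∘L adjoint X) = 1 + X ∘L adjoint X := by
    rw [map_add, adjoint_comp, adjoint_adjoint, hadj1H]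
  have hSadj' : adjoint (1 + adjoint X ∘L X) = 1 + adjoint X ∘L X := by
    rw [map_add, adjoint_comp, adjoint_adjoint, hadj1H1]
  have c6 : (adjoint U₁₀ ∘L U₁₀) ∘L (1 + X ∘L adjoint X) = 1 := by
    have h := congrArg (adjoint (𝕜 := ℂ)) hvi
    rw [adjoint_comp, adjoint_comp, adjoint_adjoint, hSadj, hadj1H, ← comp_assoc] at h
    exact h
  have c7 : (1 + X ∘L adjoint X) ∘L (adjoint U₁₀ ∘L U₁₀) = 1 := by
    rw [← comp_assoc]; exact hvi
  have c8 : (adjoint U₀₁ ∘L U₀₁) ∘L (1 + adjoint X ∘L X) = 1 := by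
    have h := congrArg (adjoint (𝕜 := ℂ)) hvii
    rw [adjoint_comp, adjoint_comp, adjoint_adjoint, hSadj', hadj1H1, ← comp_assoc] at h
    exact h
  have c9 : (1 + adjoint X ∘L X) ∘L (adjoint U₀₁ ∘L U₀₁) = 1 := by
    rw [← comp_assoc]; exact hvii
  -- final part
  set V := (1 + X ∘L adjoint X) ∘L adjoint U₁₀ with hV
  have hTV : T₀ ∘L V = V ∘L T'' := by
    have h0 : (V ∘L U₁₀) ∘L (T₀ ∘L V) = T₀ ∘L V := by rw [hvi, one_def, id_comp]
    calc T₀ ∘L V = (V ∘L U₁₀) ∘L (T₀ ∘L V) := h0.symm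
      _ = V ∘L (U₁₀ ∘L (T₀ ∘L V)) := comp_assoc _ _ _
      _ = V ∘L ((U₁₀ ∘L T₀) ∘L V) := by rw [comp_assoc U₁₀ T₀ V]
      _ = V ∘L ((T'' ∘L U₁₀) ∘L V) := by rw [g3]
      _ = V ∘L (T'' ∘L (U₁₀ ∘L V)) := by rw [comp_assoc T'' U₁₀ V]
      _ = V ∘L (T'' ∘L 1) := by rw [hi]
      _ = V ∘L T'' := by rw [one_def, comp_id]
  have hW : (U₀₀ - Y ∘L U₁₀) ∘L T₀ = T' ∘L (U₀₀ - Y ∘L U₁₀) := by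
    simp only [sub_comp, comp_sub, ← comp_assoc] at g1 ⊢
    rw [g1, comp_assoc Y U₁₀ T₀, g3, ← comp_assoc]; abel
  have hkey : Y - U₀₁ ∘L (adjoint X ∘L V) = -((U₀₀ - Y ∘L U₁₀) ∘L V) := by
    rw [← comp_assoc U₀₁ (adjoint X) V, ← c1, sub_comp, neg_sub, comp_assoc Y U₁₀ V, hi,
      one_def, comp_id]
  have hfin : T' ∘L (Y - U₀₁ ∘L (adjoint X ∘L V)) = (Y - U₀₁ ∘L (adjoint X ∘L V)) ∘L T'' := by
    rw [hkey, comp_neg, neg_comp, neg_inj, ← comp_assoc T' _ V, ← hW, comp_assoc, hTV,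
      ← comp_assoc]
  exact ⟨c1, c2, ⟨(1 + adjoint X ∘L X) ∘L adjoint U₀₁, hiii, hvii⟩, g3, a3, c6, c7, c8, c9,
    V, hi, hvi, hfin⟩
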